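/- Let (M,μ) be a measure space, let g : M → M be a measurable map that preserves μ (the pushforward of μ under g equals μ), let Z₁ : M → [0,∞) be integrable and set Z₂ = Z₁ ∘ g, and let f : [0,∞) → ℝ be a convex function such that f ∘ (2Z₁) and f ∘ (Z₁ + Z₂) are μ-integrable. Then ∫_M f(Z₁ + Z₂) dμ ≤ ∫_M f(2Z₁) dμ. -/

import Mathlib

open MeasureTheory

/-- Non-strict part of Lemma 1: if `g` preserves `μ`, `Z₁ ≥ 0` is integrable, `Z₂ = Z₁ ∘ g`,
and `f` is convex on `[0,∞)` with `f∘(2Z₁)` and `f∘(Z₁+Z₂)` integrable, then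
`∫ f(Z₁+Z₂) dμ ≤ ∫ f(2Z₁) dμ`. -/
theorem ring_diagram_ineq {M : Type*} [MeasurableSpace M] (μ : Measure M)
    (g : M → M) (hg : MeasurePreserving g μ μ)
    (Z₁ : M → ℝ) (hZ₁nn : ∀ m, 0 ≤ Z₁ m) (hZ₁int : Integrable Z₁ μ)
    (f : ℝ → ℝ) (hf : ConvexOn ℝ (Set.Ici 0) f)
    (hint₁ : Integrable (fun m => f (2 * Z₁ m)) μ)
    (hint₂ : Integrable (fun m => f (Z₁ m + Z₁ (g m))) μ) :
    ∫ m, f (Z₁ m + Z₁ (g m)) ∂μ ≤ ∫ m, f (2 * Z₁ m) ∂μ := by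
  have hint₃ : Integrable (fun m => f (2 * Z₁ (g m))) μ := by
    have h := (integrable_map_measure (hg.map_eq ▸ hint₁.aestronglyMeasurable)
      hg.measurable.aemeasurable).1 (hg.map_eq.symm ▸ hint₁)
    exact h
  have hcomp : ∫ m, f (2 * Z₁ (g m)) ∂μ = ∫ m, f (2 * Z₁ m) ∂μ := by
    conv_rhs => rw [← hg.map_eq]
    exact (integral_map hg.measurable.aemeasurable
      (hg.map_eq ▸ hint₁.aestronglyMeasurable)).symm
  have hpt : ∀ m, f (Z₁ m + Z₁ (g m)) ≤ (f (2 * Z₁ m) + f (2 * Z₁ (g m))) / 2 := by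
    intro m
    have h1 : (0:ℝ) ≤ 2 * Z₁ m := by have := hZ₁nn m; linarith
    have h2 : (0:ℝ) ≤ 2 * Z₁ (g m) := by have := hZ₁nn (g m); linarith
    have := hf.2 (Set.mem_Ici.2 h1) (Set.mem_Ici.2 h2)
      (by norm_num : (0:ℝ) ≤ 1/2) (by norm_num : (0:ℝ) ≤ 1/2) (by norm_num)
    have heq : (1/2 : ℝ) • (2 * Z₁ m) + (1/2 : ℝ) • (2 * Z₁ (g m)) = Z₁ m + Z₁ (g m) := by
      simp [smul_eq_mul]
    rw [heq] at this
    simpa [smul_eq_mul] using this.trans_eq (by simp [smul_eq_mul]; ring)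
  calc ∫ m, f (Z₁ m + Z₁ (g m)) ∂μ
      ≤ ∫ m, (f (2 * Z₁ m) + f (2 * Z₁ (g m))) / 2 ∂μ := by
        refine integral_mono hint₂ ?_ hpt
        exact (hint₁.add hint₃).div_const 2
    _ = (∫ m, f (2 * Z₁ m) ∂μ + ∫ m, f (2 * Z₁ (g m)) ∂μ) / 2 := by
        rw [integral_div, integral_add hint₁ hint₃]
    _ = ∫ m, f (2 * Z₁ m) ∂μ := by rw [hcomp]; ring
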